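/- Let T be a triangulated category with translation functor [1], and let F1, F2, F3, G1, G2, G3 : T → T be triangulated functors with natural transformations α_j : F_j → F_{j+1}, β_j : G_j → G_{j+1}, γ_j : F_j → G_j (j = 1, 2) satisfying γ_2 ∘ α_1 = β_1 ∘ γ_1. Assume that for every object X the sequences F1X → F2X → F3X → F1X[1] and G1X → G2X → G3X → G1X[1] are distinguished triangles, and that Hom_T(F1X, G3Y[-1]) = 0 for all objects X, Y. Then there exists a natural transformation γ_3 : F3 → G3 such that γ_3 ∘ α_2 = β_2 ∘ γ_2. -/

import Mathlib

open CategoryTheory CategoryTheory.Pretriangulated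

/-- Lemma "induce natural transformation": given triangulated endofunctors `F₁, F₂, F₃, G₁, G₂, G₃`
of a (pre)triangulated category `T`, natural transformations `α₁ : F₁ ⟶ F₂`, `α₂ : F₂ ⟶ F₃`,
`β₁ : G₁ ⟶ G₂`, `β₂ : G₂ ⟶ G₃`, `γ₁ : F₁ ⟶ G₁`, `γ₂ : F₂ ⟶ G₂` with `γ₂ ∘ α₁ = β₁ ∘ γ₁`,
such that for each object the `F`- and `G`-sequences fit into distinguished triangles, and
`Hom(F₁X, G₃Y[-1]) = 0` for all `X`, `Y`, there exists `γ₃ : F₃ ⟶ G₃` with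
`γ₃ ∘ α₂ = β₂ ∘ γ₂`. -/
theorem stmt0 {T : Type*} [Category T] [Limits.HasZeroObject T] [Preadditive T]
    [HasShift T ℤ] [∀ n : ℤ, (shiftFunctor T n).Additive] [Pretriangulated T]
    (F₁ F₂ F₃ G₁ G₂ G₃ : T ⥤ T)
    [F₁.CommShift ℤ] [F₂.CommShift ℤ] [F₃.CommShift ℤ]
    [G₁.CommShift ℤ] [G₂.CommShift ℤ] [G₃.CommShift ℤ]
    [F₁.IsTriangulated] [F₂.IsTriangulated] [F₃.IsTriangulated]
    [G₁.IsTriangulated] [G₂.IsTriangulated] [G₃.IsTriangulated]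
    (α₁ : F₁ ⟶ F₂) (α₂ : F₂ ⟶ F₃) (β₁ : G₁ ⟶ G₂) (β₂ : G₂ ⟶ G₃)
    (γ₁ : F₁ ⟶ G₁) (γ₂ : F₂ ⟶ G₂)
    (hcomm : α₁ ≫ γ₂ = γ₁ ≫ β₁)
    (hF : ∀ X : T, ∃ δ : F₃.obj X ⟶ (F₁.obj X)⟦(1 : ℤ)⟧,
      Triangle.mk (α₁.app X) (α₂.app X) δ ∈ distTriang T)
    (hG : ∀ X : T, ∃ δ : G₃.obj X ⟶ (G₁.obj X)⟦(1 : ℤ)⟧,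
      Triangle.mk (β₁.app X) (β₂.app X) δ ∈ distTriang T)
    (hvanish : ∀ X Y : T, ∀ f : F₁.obj X ⟶ (G₃.obj Y)⟦(-1 : ℤ)⟧, f = 0) :
    ∃ γ₃ : F₃ ⟶ G₃, α₂ ≫ γ₃ = γ₂ ≫ β₂ := by
  choose δF hδF using hF
  choose δG hδG using hG
  -- vanishing in the shifted form
  have hvanish' : ∀ X Y : T, ∀ h : (F₁.obj X)⟦(1 : ℤ)⟧ ⟶ G₃.obj Y, h = 0 := by
    intro X Y h
    have h0 := hvanish X Y
      ((shiftFunctorCompIsoId T (1 : ℤ) (-1 : ℤ) (by ring)).inv.app (F₁.obj X) ≫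
        (shiftFunctor T (-1 : ℤ)).map h)
    have h1 : (shiftFunctor T (-1 : ℤ)).map h = 0 := by
      have := congrArg (fun t =>
        (shiftFunctorCompIsoId T (1 : ℤ) (-1 : ℤ) (by ring)).hom.app (F₁.obj X) ≫ t) h0
      simpa using this
    exact (shiftFunctor T (-1 : ℤ)).map_injective (by rw [h1, Functor.map_zero])
  -- componentwise fill-in
  have key : ∀ X : T, ∃ c : F₃.obj X ⟶ G₃.obj X,
      α₂.app X ≫ c = γ₂.app X ≫ β₂.app X := by
    intro X
    obtain ⟨c, hc, -⟩ := complete_distinguished_triangle_morphism _ _ (hδF X) (hδG X)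
      (γ₁.app X) (γ₂.app X) (NatTrans.congr_app hcomm X)
    exact ⟨c, hc⟩
  choose c hc using key
  -- uniqueness given the vanishing
  have uniq : ∀ X Y : T, ∀ f g : F₃.obj X ⟶ G₃.obj Y,
      α₂.app X ≫ f = α₂.app X ≫ g → f = g := by
    intro X Y f g h
    have hz : α₂.app X ≫ (f - g) = 0 := by
      rw [Preadditive.comp_sub, h, sub_self]
    obtain ⟨e, he⟩ := Triangle.yoneda_exact₃ _ (hδF X) (f - g) hz
    rw [hvanish' X Y e] at he
    exact sub_eq_zero.mp (he.trans Limits.comp_zero)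
  refine ⟨{ app := c, naturality := ?_ }, ?_⟩
  · intro X Y f
    apply uniq
    rw [← α₂.naturality_assoc, hc Y, γ₂.naturality_assoc, β₂.naturality,
      reassoc_of% (hc X)]
  · ext X
    simpa using hc X
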